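/- Define Γ_{j,a} = ((k−j)p)! · j! · C(k,j)² · (p(p−1))^j · C(j, 2k−a) for integers 2k−a ≤ j ≤ k, where p ≥ 3 is prime, k < p, and k ≤ a ≤ 2k. Then the sequence (Γ_{j,a})_{j=2k−a}^{k} is non-increasing in j, and consequently the alternating sum f(a;k) = p^{−a} Σ_{j=2k−a}^{k} (−1)^{j−(2k−a)} Γ_{j,a} satisfies 0 ≤ f(a;k) ≤ p^{−a} Γ_{2k−a,a} = p^{−a} ((a−k)p)! (2k−a)! C(k,2k−a)² (p(p−1))^{2k−a}. -/
import Mathlib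


open Finset

/-- `Γ_{j,a} = ((k−j)p)! · j! · C(k,j)² · (p(p−1))^j · C(j, 2k−a)`. -/
def Gam (p k a j : ℕ) : ℕ :=
  ((k - j) * p).factorial * j.factorial * (Nat.choose k j) ^ 2 *
    (p * (p - 1)) ^ j * Nat.choose j (2 * k - a)

/-- The sequence `Γ_{j,a}` is non-increasing for `2k−a ≤ j ≤ k`, hence the alternating sum
`f(a;k) = p^{−a} Σ_j (−1)^{j−(2k−a)} Γ_{j,a}` satisfies
`0 ≤ f(a;k) ≤ p^{−a} Γ_{2k−a,a} = p^{−a}((a−k)p)!(2k−a)!C(k,2k−a)²(p(p−1))^{2k−a}`. -/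
lemma key_fact (p q : ℕ) (hp3 : 3 ≤ p) (hq : 1 ≤ q) :
    ((q - 1) * p).factorial * (q ^ 2 * p * (p - 1)) ≤ (q * p).factorial := by
  obtain ⟨s, rfl⟩ : ∃ s, q = s + 1 := ⟨q - 1, by omega⟩
  obtain ⟨r, rfl⟩ : ∃ r, p = r + 3 := ⟨p - 3, by omega⟩
  have h1 : (s + 1) * (r + 3) = (s * (r + 3) + r) + 3 := by ring
  rw [h1]
  have h2 : ((s * (r + 3) + r) + 3).factorial =
      ((s * (r + 3) + r) + 3) * (((s * (r + 3) + r) + 2) * ((s * (r + 3) + r) + 1)) *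
        (s * (r + 3) + r).factorial := by
    simp [Nat.factorial_succ]; ring
  rw [h2]
  have h4 : (s + 1 - 1) * (r + 3) = s * (r + 3) := by simp
  rw [h4]
  have h3 : (s * (r + 3)).factorial ≤ (s * (r + 3) + r).factorial :=
    Nat.factorial_le (by omega)
  have h5 : (s + 1) ^ 2 * (r + 3) * (r + 3 - 1) ≤
      ((s * (r + 3) + r) + 3) * (((s * (r + 3) + r) + 2) * ((s * (r + 3) + r) + 1)) := by
    have hr : r + 3 - 1 = r + 2 := by omega
    rw [hr, show (s + 1) ^ 2 * (r + 3) * (r + 2)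
        = ((s * (r + 3) + r) + 3) * ((s + 1) * (r + 2)) from by ring]
    refine Nat.mul_le_mul_left _ ?_
    calc (s + 1) * (r + 2) ≤ (s * (r + 3) + r) + 2 := by nlinarith
      _ ≤ ((s * (r + 3) + r) + 2) * ((s * (r + 3) + r) + 1) :=
          Nat.le_mul_of_pos_right _ (by omega)
  calc (s * (r + 3)).factorial * ((s + 1) ^ 2 * (r + 3) * (r + 3 - 1))
      ≤ (s * (r + 3) + r).factorial *
        (((s * (r + 3) + r) + 3) * (((s * (r + 3) + r) + 2) * ((s * (r + 3) + r) + 1))) :=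
        Nat.mul_le_mul h3 h5
    _ = _ := by ring

lemma gam_antitone (p k a : ℕ) (hp3 : 3 ≤ p)
    (j : ℕ) (hj1 : 2 * k - a ≤ j) (hj2 : j < k) :
    Gam p k a (j + 1) ≤ Gam p k a j := by
  set m := 2 * k - a with hm
  have hmj : m ≤ j := hj1
  have hcpos : 0 < (j + 1) * (j + 1 - m) := by
    have : 1 ≤ j + 1 - m := by omega
    positivity
  refine Nat.le_of_mul_le_mul_left ?_ hcpos
  have h1 : (j + 1) * Nat.choose k (j + 1) = (k - j) * Nat.choose k j := by
    rw [mul_comm, Nat.choose_succ_right_eq, mul_comm]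
  have h2 : (j + 1 - m) * Nat.choose (j + 1) m = (j + 1) * Nat.choose j m := by
    rw [← Nat.choose_symm (show m ≤ j + 1 by omega),
      show j + 1 - m = (j - m) + 1 from by omega,
      ← Nat.choose_symm hmj]
    exact ((Nat.add_one_mul_choose_eq j (j - m)).trans (mul_comm _ _)).symm
  have hkj : k - (j + 1) = (k - j) - 1 := by omega
  have LHSeq : (j + 1) * (j + 1 - m) * Gam p k a (j + 1) =
      (j.factorial * (p * (p - 1)) ^ j * Nat.choose k j ^ 2 * Nat.choose j m * (j + 1)) *
        ((((k - j) - 1) * p).factorial * ((k - j) ^ 2 * p * (p - 1))) := by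
    rw [Gam, ← hm, hkj, Nat.factorial_succ]
    rw [show (j + 1) * (j + 1 - m) *
        ((((k - j) - 1) * p).factorial * ((j + 1) * j.factorial) *
          Nat.choose k (j + 1) ^ 2 * (p * (p - 1)) ^ (j + 1) * Nat.choose (j + 1) m)
        = (((k - j) - 1) * p).factorial * j.factorial * (p * (p - 1)) ^ j * (p * (p - 1)) *
          ((j + 1) * Nat.choose k (j + 1)) ^ 2 * ((j + 1 - m) * Nat.choose (j + 1) m)
        from by ring, h1, h2]
    ring
  have RHSeq : (j + 1) * (j + 1 - m) * Gam p k a j =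
      (j.factorial * (p * (p - 1)) ^ j * Nat.choose k j ^ 2 * Nat.choose j m * (j + 1)) *
        (((k - j) * p).factorial * (j + 1 - m)) := by
    rw [Gam, ← hm]; ring
  rw [LHSeq, RHSeq]
  apply Nat.mul_le_mul_left
  calc (((k - j) - 1) * p).factorial * ((k - j) ^ 2 * p * (p - 1))
      ≤ ((k - j) * p).factorial := key_fact p (k - j) hp3 (by omega)
    _ ≤ ((k - j) * p).factorial * (j + 1 - m) :=
        Nat.le_mul_of_pos_right _ (by omega)

lemma alt_sum : ∀ N : ℕ, ∀ g : ℕ → ℝ, (∀ i, 0 ≤ g i) → (∀ i < N, g (i + 1) ≤ g i) →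
    0 ≤ ∑ i ∈ Finset.range (N + 1), (-1 : ℝ) ^ i * g i ∧
      ∑ i ∈ Finset.range (N + 1), (-1 : ℝ) ^ i * g i ≤ g 0 := by
  intro N
  induction N with
  | zero => intro g h0 _; simp [h0 0]
  | succ N ih =>
    intro g h0 hmono
    obtain ⟨hT1, hT2⟩ := ih (fun i => g (i + 1)) (fun i => h0 _)
      (fun i hi => hmono (i + 1) (by omega))
    have hg10 : g 1 ≤ g 0 := hmono 0 (by omega)
    have hsum : ∑ i ∈ Finset.range (N + 1 + 1), (-1 : ℝ) ^ i * g i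
        = g 0 - ∑ i ∈ Finset.range (N + 1), (-1 : ℝ) ^ i * g (i + 1) := by
      rw [Finset.sum_range_succ']
      have he : ∀ i, (-1 : ℝ) ^ (i + 1) * g (i + 1) = -((-1 : ℝ) ^ i * g (i + 1)) :=
        fun i => by ring
      simp only [he, Finset.sum_neg_distrib, pow_zero, one_mul]
      ring
    rw [hsum]
    constructor <;> linarith

theorem stmt_14 (p k a : ℕ) (hp : p.Prime) (hp3 : 3 ≤ p) (hk : k < p)
    (hak : k ≤ a) (ha : a ≤ 2 * k) :
    (∀ j, 2 * k - a ≤ j → j < k → Gam p k a (j + 1) ≤ Gam p k a j) ∧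
    (0 ≤ (1 / (p : ℝ) ^ a) *
        ∑ j ∈ Finset.Icc (2 * k - a) k, (-1 : ℝ) ^ (j - (2 * k - a)) * (Gam p k a j : ℝ)) ∧
    ((1 / (p : ℝ) ^ a) *
        ∑ j ∈ Finset.Icc (2 * k - a) k, (-1 : ℝ) ^ (j - (2 * k - a)) * (Gam p k a j : ℝ)) ≤
      (1 / (p : ℝ) ^ a) * (Gam p k a (2 * k - a) : ℝ) ∧
    (Gam p k a (2 * k - a) : ℝ) =
      (((a - k) * p).factorial : ℝ) * ((2 * k - a).factorial : ℝ) *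
        (Nat.choose k (2 * k - a) : ℝ) ^ 2 * ((p : ℝ) * ((p : ℝ) - 1)) ^ (2 * k - a) := by
  have hmk : 2 * k - a ≤ k := by omega
  have hre : ∑ j ∈ Finset.Icc (2 * k - a) k, (-1 : ℝ) ^ (j - (2 * k - a)) * (Gam p k a j : ℝ)
      = ∑ i ∈ Finset.range ((k - (2 * k - a)) + 1),
          (-1 : ℝ) ^ i * ((Gam p k a ((2 * k - a) + i) : ℕ) : ℝ) := by
    rw [← Finset.Ico_add_one_right_eq_Icc, Finset.sum_Ico_eq_sum_range,
      show k + 1 - (2 * k - a) = (k - (2 * k - a)) + 1 from by omega]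
    exact Finset.sum_congr rfl fun i _ => by rw [Nat.add_sub_cancel_left]
  obtain ⟨halt1, halt2⟩ := alt_sum (k - (2 * k - a))
    (fun i => ((Gam p k a ((2 * k - a) + i) : ℕ) : ℝ))
    (fun i => Nat.cast_nonneg _)
    (fun i hi => by
      have h := gam_antitone p k a hp3 ((2 * k - a) + i) (by omega) (by omega)
      show ((Gam p k a ((2 * k - a) + i + 1) : ℕ) : ℝ) ≤ ((Gam p k a ((2 * k - a) + i) : ℕ) : ℝ)
      exact_mod_cast h)
  have hpa : (0 : ℝ) ≤ 1 / (p : ℝ) ^ a := by positivity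
  refine ⟨fun j hj1 hj2 => gam_antitone p k a hp3 j hj1 hj2, ?_, ?_, ?_⟩
  · exact mul_nonneg hpa (by rw [hre]; exact halt1)
  · refine mul_le_mul_of_nonneg_left ?_ hpa
    rw [hre]
    simpa using halt2
  · rw [Gam, Nat.choose_self, show k - (2 * k - a) = a - k from by omega]
    have : ((p * (p - 1) : ℕ) : ℝ) = (p : ℝ) * ((p : ℝ) - 1) := by
      push_cast [Nat.cast_sub (show 1 ≤ p by omega)]; ring
    push_cast [this]
    ring
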